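/- Suppose f is convex and L-smooth on a convex compact set S of diameter D, and consider one outer cycle of PolyCD with exact line-search: x^{k} minimizes f over the segment [x^{k-1}, v^k] for k = 1,…,M, where v^1,…,v^M are the vertices of S. Then (f(x^M) - f*)² ≤ 2MLD²(f(x^0) - f(x^M)), where f* = min_{x∈S} f(x). -/

import Mathlib

open scoped RealInnerProductSpace

open Filter Topology

section PolyCDAux

variable {E : Type*} [NormedAddCommGroup E] [InnerProductSpace ℝ E] [CompleteSpace E]
/-- Gradient inequality for convex functions on a set. -/
lemma polycd_grad_convex {S : Set E} {f : E → ℝ} {ga a b : E}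
    (hconv : ConvexOn ℝ S f) (ha : a ∈ S) (hb : b ∈ S)
    (hga : HasGradientAt f ga a) :
    ⟪ga, b - a⟫ ≤ f b - f a := by
  have hq : HasDerivAt (fun t : ℝ => f (a + t • (b - a))) ⟪ga, b - a⟫ 0 := by
    have hφ : HasDerivAt (fun s : ℝ => a + s • (b - a)) (b - a) 0 := by
      simpa using ((hasDerivAt_id (0:ℝ)).smul_const (b - a)).const_add a
    have hf : HasFDerivAt f (InnerProductSpace.toDual ℝ E ga) (a + (0:ℝ) • (b - a)) := by
      simpa using hga.hasFDerivAt
    simpa [InnerProductSpace.toDual_apply_apply, Function.comp_def] using hf.comp_hasDerivAt 0 hφ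
  have hslope := hasDerivAt_iff_tendsto_slope.1 hq
  have hmono : Tendsto (slope (fun t : ℝ => f (a + t • (b - a))) 0) (𝓝[>] 0)
      (𝓝 ⟪ga, b - a⟫) :=
    hslope.mono_left (nhdsWithin_mono _ (fun t ht => ne_of_gt ht))
  refine le_of_tendsto hmono ?_
  filter_upwards [Ioc_mem_nhdsGT_of_mem (Set.left_mem_Ico.2 one_pos)] with t ht
  have hcomb : a + t • (b - a) = (1 - t) • a + t • b := by
    rw [smul_sub, sub_smul, one_smul]; abel
  have hcx : f ((1 - t) • a + t • b) ≤ (1 - t) * f a + t * f b :=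
    hconv.2 ha hb (by linarith [ht.2]) (le_of_lt ht.1) (by ring)
  rw [slope_def_field]
  have h0 : a + (0:ℝ) • (b - a) = a := by simp
  rw [h0, hcomb, sub_zero, div_le_iff₀ ht.1]
  nlinarith [hcx]

/-- Descent lemma along a segment contained in `S`. -/
lemma polycd_descent {S : Set E} {f : E → ℝ} {g : E → E} {L : ℝ} {a b : E}
    (hS : Convex ℝ S) (hgrad : ∀ y ∈ S, HasGradientAt f (g y) y)
    (hlip : ∀ p ∈ S, ∀ q ∈ S, ‖g p - g q‖ ≤ L * ‖p - q‖)
    (hL : 0 ≤ L) (ha : a ∈ S) (hb : b ∈ S) :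
    f b ≤ f a + ⟪g a, b - a⟫ + L / 2 * ‖b - a‖ ^ 2 := by
  set u := b - a with hu
  have hmem : ∀ t : ℝ, t ∈ Set.Icc (0:ℝ) 1 → a + t • u ∈ S := by
    intro t ht
    have h1 : a + t • u = (1 - t) • a + t • b := by
      rw [hu, smul_sub, sub_smul, one_smul]; abel
    rw [h1]
    exact hS ha hb (by linarith [ht.2]) ht.1 (by ring)
  have hq : ∀ t ∈ Set.Icc (0:ℝ) 1,
      HasDerivAt (fun s : ℝ => f (a + s • u)) ⟪g (a + t • u), u⟫ t := by
    intro t ht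
    have hφ : HasDerivAt (fun s : ℝ => a + s • u) u t := by
      simpa using ((hasDerivAt_id t).smul_const u).const_add a
    have hf := (hgrad _ (hmem t ht)).hasFDerivAt
    simpa [InnerProductSpace.toDual_apply_apply, Function.comp_def] using hf.comp_hasDerivAt t hφ
  set F : ℝ → ℝ := fun t => f (a + t • u) - t * ⟪g a, u⟫ - t ^ 2 * (L / 2 * ‖u‖ ^ 2)
    with hF
  have hF' : ∀ t ∈ Set.Icc (0:ℝ) 1, HasDerivAt F
      (⟪g (a + t • u), u⟫ - 1 * ⟪g a, u⟫ - (↑2 * t ^ 1) * (L / 2 * ‖u‖ ^ 2)) t := by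
    intro t ht
    exact ((hq t ht).sub ((hasDerivAt_id t).mul_const _)).sub
      ((hasDerivAt_pow 2 t).mul_const _)
  have hcont : ContinuousOn F (Set.Icc 0 1) :=
    fun t ht => ((hF' t ht).continuousAt).continuousWithinAt
  have hdiff : DifferentiableOn ℝ F (interior (Set.Icc (0:ℝ) 1)) := by
    intro t ht
    rw [interior_Icc] at ht
    exact ((hF' t ⟨ht.1.le, ht.2.le⟩).differentiableAt).differentiableWithinAt
  have hder : ∀ t ∈ interior (Set.Icc (0:ℝ) 1), deriv F t ≤ 0 := by
    intro t ht
    rw [interior_Icc] at ht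
    have htI : t ∈ Set.Icc (0:ℝ) 1 := ⟨ht.1.le, ht.2.le⟩
    rw [(hF' t htI).deriv]
    have h1 : ⟪g (a + t • u) - g a, u⟫ ≤ ‖g (a + t • u) - g a‖ * ‖u‖ :=
      real_inner_le_norm _ _
    have h2 : ‖g (a + t • u) - g a‖ ≤ L * ‖(a + t • u) - a‖ :=
      hlip _ (hmem t htI) _ ha
    have h3 : ‖(a + t • u) - a‖ = t * ‖u‖ := by
      rw [add_sub_cancel_left, norm_smul, Real.norm_eq_abs, abs_of_nonneg ht.1.le]
    have h4 : ⟪g (a + t • u) - g a, u⟫ = ⟪g (a + t • u), u⟫ - ⟪g a, u⟫ := by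
      rw [inner_sub_left]
    have h5 : ⟪g (a + t • u), u⟫ - ⟪g a, u⟫ ≤ L * (t * ‖u‖) * ‖u‖ := by
      rw [← h4]
      calc ⟪g (a + t • u) - g a, u⟫ ≤ ‖g (a + t • u) - g a‖ * ‖u‖ := h1
        _ ≤ (L * ‖(a + t • u) - a‖) * ‖u‖ :=
            mul_le_mul_of_nonneg_right h2 (norm_nonneg u)
        _ = L * (t * ‖u‖) * ‖u‖ := by rw [h3]
    simp only [pow_one, one_mul]
    nlinarith [h5]
  have hanti := antitoneOn_of_deriv_nonpos (convex_Icc (0:ℝ) 1) hcont hdiff hder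
  have h01 := hanti (Set.left_mem_Icc.2 zero_le_one) (Set.right_mem_Icc.2 zero_le_one)
    zero_le_one
  have hF0 : F 0 = f a := by simp [hF]
  have hF1 : F 1 = f b - ⟪g a, u⟫ - L / 2 * ‖u‖ ^ 2 := by
    simp [hF, hu]
  rw [hF0, hF1] at h01
  linarith

/-- Elementary optimization lemma. -/
lemma polycd_step_bound {X A B β : ℝ} (hA : 0 < A) (hB : 0 ≤ B) (hβ : 0 ≤ β)
    (h : ∀ θ : ℝ, 0 < θ → θ ≤ 1 → X ≤ B / θ + θ * (A / 2)) :
    β + X ≤ (β + B) + Real.sqrt (2 * A * (β + B)) := by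
  have hsq0 : 0 ≤ Real.sqrt (2 * A * (β + B)) := Real.sqrt_nonneg _
  rcases le_or_gt (2 * B) A with hcase | hcase
  · rcases hB.eq_or_lt with hB0 | hB0
    · -- B = 0 : show X ≤ 0
      have hX : X ≤ 0 := by
        by_contra hXpos
        push_neg at hXpos
        have hθ0 : 0 < min 1 (X / A) := lt_min one_pos (by positivity)
        have hth := h (min 1 (X / A)) hθ0 (min_le_left _ _)
        rw [← hB0] at hth
        simp only [zero_div, zero_add] at hth
        have h1 : min 1 (X / A) * (A / 2) ≤ (X / A) * (A / 2) :=
          mul_le_mul_of_nonneg_right (min_le_right _ _) (by positivity)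
        have h2 : (X / A) * (A / 2) = X / 2 := by field_simp
        nlinarith
      linarith
    · -- B > 0
      set θ := Real.sqrt (2 * B / A) with hθdef
      have h2BA : (0:ℝ) < 2 * B / A := by positivity
      have hθpos : 0 < θ := Real.sqrt_pos.2 h2BA
      have hθsq : θ ^ 2 = 2 * B / A := Real.sq_sqrt h2BA.le
      have hθ1 : θ ≤ 1 := by
        rw [hθdef, show (1:ℝ) = Real.sqrt 1 from (Real.sqrt_one).symm]
        exact Real.sqrt_le_sqrt (by rw [div_le_one hA]; linarith)
      have hX := h θ hθpos hθ1
      have hBθ : B / θ = θ * (A / 2) := by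
        rw [div_eq_iff hθpos.ne']
        have h9 : θ * (A / 2) * θ = θ ^ 2 * (A / 2) := by ring
        rw [h9, hθsq]
        field_simp
      have hθA : θ * A = Real.sqrt (2 * A * B) := by
        rw [show 2 * A * B = (2 * B / A) * A ^ 2 by field_simp,
          Real.sqrt_mul h2BA.le, Real.sqrt_sq hA.le, hθdef]
      have hmono : Real.sqrt (2 * A * B) ≤ Real.sqrt (2 * A * (β + B)) :=
        Real.sqrt_le_sqrt (by nlinarith)
      have : X ≤ Real.sqrt (2 * A * (β + B)) := by
        calc X ≤ B / θ + θ * (A / 2) := hX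
          _ = θ * A := by rw [hBθ]; ring
          _ = Real.sqrt (2 * A * B) := hθA
          _ ≤ _ := hmono
      linarith
  · -- 2B > A : take θ = 1
    have hX := h 1 one_pos le_rfl
    simp only [div_one, one_mul] at hX
    have hA2 : A / 2 ≤ Real.sqrt (2 * A * (β + B)) := by
      have h1 : A * A ≤ 2 * A * (β + B) := by nlinarith
      calc A / 2 ≤ A := by linarith
        _ = Real.sqrt (A * A) := (Real.sqrt_mul_self hA.le).symm
        _ ≤ _ := Real.sqrt_le_sqrt h1
    linarith

end PolyCDAux
set_option maxHeartbeats 1000000 in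
theorem stmt10 {d : ℕ} (M : ℕ) (hM : 1 ≤ M)
    (v : ℕ → EuclideanSpace ℝ (Fin d))
    (S : Set (EuclideanSpace ℝ (Fin d)))
    (hSdef : S = convexHull ℝ (v '' Set.Icc 1 M))
    (D L : ℝ) (hL : 0 < L) (hD : ∀ a ∈ S, ∀ b ∈ S, ‖a - b‖ ≤ D)
    (f : EuclideanSpace ℝ (Fin d) → ℝ)
    (g : EuclideanSpace ℝ (Fin d) → EuclideanSpace ℝ (Fin d))
    (hconv : ConvexOn ℝ S f)
    (hgrad : ∀ y ∈ S, HasGradientAt f (g y) y)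
    (hlip : ∀ a ∈ S, ∀ b ∈ S, ‖g a - g b‖ ≤ L * ‖a - b‖)
    (xstar : EuclideanSpace ℝ (Fin d)) (hxs : xstar ∈ S)
    (hmin : ∀ y ∈ S, f xstar ≤ f y)
    (x : ℕ → EuclideanSpace ℝ (Fin d)) (hx0 : x 0 ∈ S)
    (α : ℕ → ℝ)
    (hstep : ∀ k, 1 ≤ k → k ≤ M →
      α k ∈ Set.Icc (0 : ℝ) 1 ∧
      x k = x (k - 1) + α k • (v k - x (k - 1)) ∧
      ∀ β ∈ Set.Icc (0 : ℝ) 1, f (x k) ≤ f (x (k - 1) + β • (v k - x (k - 1)))) :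
    (f (x M) - f xstar) ^ 2 ≤ 2 * M * L * D ^ 2 * (f (x 0) - f (x M)) := by
  have hSconv : Convex ℝ S := by rw [hSdef]; exact convex_convexHull ℝ _
  have hvS : ∀ m, 1 ≤ m → m ≤ M → v m ∈ S := by
    intro m h1 h2
    rw [hSdef]
    exact subset_convexHull ℝ _ ⟨m, ⟨h1, h2⟩, rfl⟩
  have hxS : ∀ i, i ≤ M → x i ∈ S := by
    intro i
    induction i with
    | zero => intro _; exact hx0
    | succ n ih =>
      intro hn
      obtain ⟨hα, hxi, _⟩ := hstep (n + 1) (by omega) hn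
      simp only [Nat.add_sub_cancel] at hxi
      have hcomb : x (n + 1) = (1 - α (n + 1)) • x n + α (n + 1) • v (n + 1) := by
        rw [hxi]; module
      rw [hcomb]
      exact hSconv (ih (by omega)) (hvS (n + 1) (by omega) hn)
        (by linarith [hα.2]) hα.1 (by ring)
  -- D ≥ 0
  have hD0 : (0:ℝ) ≤ D := by
    have := hD (x 0) hx0 (x 0) hx0
    simpa using this
  rcases hD0.eq_or_lt with hDeq | hDpos
  · -- degenerate case D = 0
    have hxMS : x M ∈ S := hxS M le_rfl
    have hMx : x M = xstar := by
      have h1 := hD (x M) hxMS xstar hxs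
      rw [← hDeq] at h1
      have h2 : ‖x M - xstar‖ = 0 := le_antisymm h1 (norm_nonneg _)
      rwa [norm_eq_zero, sub_eq_zero] at h2
    rw [hMx, sub_self, ← hDeq]
    norm_num
  -- main case
  set A := L * D ^ 2 with hAdef
  have hA : 0 < A := by positivity
  set δ : ℕ → ℝ := fun i => f (x i) - f (x (i + 1)) with hδdef
  have hδ0 : ∀ i, i < M → 0 ≤ δ i := by
    intro i hi
    obtain ⟨hα, _, hls⟩ := hstep (i + 1) (by omega) hi
    have h1 := hls 0 ⟨le_rfl, zero_le_one⟩
    simp only [Nat.add_sub_cancel, zero_smul, add_zero] at h1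
    simp only [hδdef]
    linarith
  set w : ℕ → ℝ := fun i => δ i + Real.sqrt (2 * A * δ i) with hwdef
  have hw0 : ∀ i, i < M → 0 ≤ w i := by
    intro i hi
    have := hδ0 i hi
    have := Real.sqrt_nonneg (2 * A * δ i)
    simp only [hwdef]
    linarith
  -- variational inequality at line-search minimizers
  have varineq : ∀ i, 1 ≤ i → i ≤ M → ∀ β' : ℝ, 0 ≤ β' → β' ≤ 1 →
      ⟪g (x i), x i - (x (i - 1) + β' • (v i - x (i - 1)))⟫ ≤ 0 := by
    intro i hi1 hiM β' hβ'0 hβ'1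
    obtain ⟨hα, hxi, hls⟩ := hstep i hi1 hiM
    set p := x (i - 1) with hpdef
    set s := p + β' • (v i - p) with hsdef
    have hpS : p ∈ S := hxS (i - 1) (by omega)
    have hxiS : x i ∈ S := hxS i hiM
    have hviS : v i ∈ S := hvS i hi1 hiM
    have hsS : s ∈ S := by
      have h1 : s = (1 - β') • p + β' • v i := by
        rw [hsdef]; module
      rw [h1]
      exact hSconv hpS hviS (by linarith) hβ'0 (by ring)
    have key : ∀ ε : ℝ, 0 < ε → ε ≤ 1 →
        ⟪g (x i), x i - s⟫ ≤ ε * (L * ‖x i - s‖ ^ 2) := by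
      intro ε hε0 hε1
      set r := x i + ε • (s - x i) with hrdef
      have hrseg : r = p + ((1 - ε) * α i + ε * β') • (v i - p) := by
        rw [hrdef, hsdef, hxi]; module
      have hc0 : 0 ≤ (1 - ε) * α i + ε * β' := by nlinarith [hα.1, hα.2]
      have hc1 : (1 - ε) * α i + ε * β' ≤ 1 := by nlinarith [hα.1, hα.2]
      have hfr : f (x i) ≤ f r := by
        rw [hrseg]
        exact hls _ ⟨hc0, hc1⟩
      have hrS : r ∈ S := by
        have h1 : r = (1 - ((1 - ε) * α i + ε * β')) • p
            + ((1 - ε) * α i + ε * β') • v i := by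
          rw [hrseg]; module
        rw [h1]
        exact hSconv hpS hviS (by linarith) hc0 (by ring)
      have h1 : ⟪g r, x i - r⟫ ≤ f (x i) - f r :=
        polycd_grad_convex hconv hrS hxiS (hgrad r hrS)
      have h2 : x i - r = ε • (x i - s) := by
        rw [hrdef]; module
      rw [h2, real_inner_smul_right] at h1
      have h3 : ⟪g r, x i - s⟫ ≤ 0 := by nlinarith
      have h4 : ⟪g (x i) - g r, x i - s⟫ = ⟪g (x i), x i - s⟫ - ⟪g r, x i - s⟫ := by
        rw [inner_sub_left]
      have h5 : ⟪g (x i) - g r, x i - s⟫ ≤ ‖g (x i) - g r‖ * ‖x i - s‖ :=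
        real_inner_le_norm _ _
      have h6 : ‖g (x i) - g r‖ ≤ L * ‖x i - r‖ := hlip _ hxiS _ hrS
      have h7 : ‖x i - r‖ = ε * ‖x i - s‖ := by
        rw [h2, norm_smul, Real.norm_eq_abs, abs_of_nonneg hε0.le]
      have h8 : ‖g (x i) - g r‖ * ‖x i - s‖ ≤ ε * (L * ‖x i - s‖ ^ 2) := by
        calc ‖g (x i) - g r‖ * ‖x i - s‖
            ≤ (L * ‖x i - r‖) * ‖x i - s‖ :=
              mul_le_mul_of_nonneg_right h6 (norm_nonneg _)
          _ = ε * (L * ‖x i - s‖ ^ 2) := by rw [h7]; ring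
      linarith [h3, h4, h5, h8]
    -- conclude nonpositivity
    by_contra hpos
    push_neg at hpos
    set X := ⟪g (x i), x i - s⟫ with hXdef
    set C := L * ‖x i - s‖ ^ 2 with hCdef
    have hC0 : 0 ≤ C := by positivity
    have hε0 : 0 < min 1 (X / (2 * C + 1)) := by
      apply lt_min one_pos
      positivity
    have h8 := key _ hε0 (min_le_left _ _)
    have h9 : min 1 (X / (2 * C + 1)) * C ≤ (X / (2 * C + 1)) * C :=
      mul_le_mul_of_nonneg_right (min_le_right _ _) hC0
    have h10 : (X / (2 * C + 1)) * C < X := by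
      rw [div_mul_eq_mul_div, div_lt_iff₀ (by positivity)]
      nlinarith
    linarith
  -- the transport step
  have STEP : ∀ i, i < M → ∀ z ∈ S,
      ⟪g (x i), x i - z⟫ ≤ ⟪g (x (i + 1)), x (i + 1) - z⟫ + w i := by
    intro i hi z hz
    set p := x i with hpdef
    set q := x (i + 1) with hqdef
    have hpS : p ∈ S := hxS i (by omega)
    have hqS : q ∈ S := hxS (i + 1) hi
    set β := ⟪g q, p - q⟫ with hβdef
    have hβ0 : 0 ≤ β := by
      have h1 := varineq (i + 1) (by omega) hi 0 le_rfl zero_le_one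
      simp only [Nat.add_sub_cancel, zero_smul, add_zero] at h1
      have h2 : q - p = -(p - q) := by abel
      rw [hβdef]
      rw [h2, inner_neg_right] at h1
      linarith
    set B := f p - f q - ⟪g q, p - q⟫ with hBdef
    have hB0 : 0 ≤ B := by
      have := polycd_grad_convex hconv hqS hpS (hgrad q hqS)
      simp only [hBdef]
      linarith
    set X := ⟪g p - g q, p - z⟫ with hXdef
    have htheta : ∀ θ : ℝ, 0 < θ → θ ≤ 1 → X ≤ B / θ + θ * (A / 2) := by
      intro θ hθ0 hθ1
      set w' := p + θ • (z - p) with hw'def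
      have hw'S : w' ∈ S := by
        have h1 : w' = (1 - θ) • p + θ • z := by
          rw [hw'def]; module
        rw [h1]
        exact hSconv hpS hz (by linarith) hθ0.le (by ring)
      have h1 : ⟪g q, w' - q⟫ ≤ f w' - f q :=
        polycd_grad_convex hconv hqS hw'S (hgrad q hqS)
      have h2 : f w' ≤ f p + ⟪g p, w' - p⟫ + L / 2 * ‖w' - p‖ ^ 2 :=
        polycd_descent hSconv hgrad hlip hL.le hpS hw'S
      have e1 : w' - q = (p - q) + θ • (z - p) := by rw [hw'def]; module
      have e2 : w' - p = θ • (z - p) := by rw [hw'def]; module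
      rw [e1, inner_add_right, real_inner_smul_right] at h1
      rw [e2, real_inner_smul_right, norm_smul, Real.norm_eq_abs,
        abs_of_nonneg hθ0.le, mul_pow] at h2
      have hzp : ‖z - p‖ ≤ D := hD z hz p hpS
      have hzp2 : ‖z - p‖ ^ 2 ≤ D ^ 2 := by
        have := norm_nonneg (z - p)
        nlinarith
      have hXexp : X = ⟪g q, z - p⟫ - ⟪g p, z - p⟫ := by
        rw [hXdef, inner_sub_left]
        have e3 : p - z = -(z - p) := by abel
        rw [e3, inner_neg_right, inner_neg_right]
        ring
      have hcore : X * θ ≤ B + θ ^ 2 * (A / 2) := by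
        have h9 : (L / 2 * θ ^ 2) * ‖z - p‖ ^ 2 ≤ (L / 2 * θ ^ 2) * D ^ 2 :=
          mul_le_mul_of_nonneg_left hzp2 (by positivity)
        rw [hXexp, hBdef, hAdef]
        linarith [h1, h2, h9]
      have : X ≤ (B + θ ^ 2 * (A / 2)) / θ := by
        rw [le_div_iff₀ hθ0]
        linarith [hcore]
      calc X ≤ (B + θ ^ 2 * (A / 2)) / θ := this
        _ = B / θ + θ * (A / 2) := by field_simp
    have hsb := polycd_step_bound hA hB0 hβ0 htheta
    have hβB : β + B = δ i := by
      simp only [hβdef, hBdef, hδdef, hpdef, hqdef]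
      ring
    rw [hβB] at hsb
    have id1 : ⟪g q, p - z⟫ = ⟪g q, q - z⟫ + β := by
      rw [hβdef, ← inner_add_right]
      congr 1
      abel
    have id2 : ⟪g p, p - z⟫ = ⟪g q, p - z⟫ + X := by
      rw [hXdef, inner_sub_left]
      ring
    simp only [hwdef]
    linarith [hsb, id1, id2]
  -- the chain
  have CH : ∀ t : ℕ, ∀ j m : ℕ, m ≤ M → j < m → m - j = t →
      ⟪g (x j), x j - v m⟫ ≤ ∑ i ∈ Finset.Ico j m, w i := by
    intro t
    induction t with
    | zero => intro j m _ hjm ht; omega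
    | succ t ih =>
      intro j m hmM hjm ht
      have hjM : j < M := lt_of_lt_of_le hjm hmM
      have hvmS : v m ∈ S := hvS m (by omega) hmM
      have hstep1 := STEP j hjM (v m) hvmS
      rcases Nat.eq_or_lt_of_le (Nat.succ_le_of_lt hjm) with hj | hj
      · -- base case : m = j + 1
        have hm : m = j + 1 := by omega
        subst hm
        have h1 := varineq (j + 1) (by omega) hmM 1 zero_le_one le_rfl
        simp only [Nat.add_sub_cancel] at h1
        have e1 : x j + (1:ℝ) • (v (j + 1) - x j) = v (j + 1) := by module
        rw [e1] at h1
        have hIco : Finset.Ico j (j + 1) = {j} := by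
          rw [Finset.Ico_add_one_right_eq_Icc, Finset.Icc_self]
        rw [hIco, Finset.sum_singleton]
        linarith [hstep1, h1]
      · -- recursive case
        have hrec := ih (j + 1) m hmM hj (by omega)
        have hsum : ∑ i ∈ Finset.Ico j m, w i
            = w j + ∑ i ∈ Finset.Ico (j + 1) m, w i :=
          Finset.sum_eq_sum_Ico_succ_bot hjm _
        rw [hsum]
        linarith
  -- bound at x 0 against every vertex
  set W := ∑ i ∈ Finset.range M, w i with hWdef
  have hvbound : ∀ m, 1 ≤ m → m ≤ M → ⟪g (x 0), x 0 - v m⟫ ≤ W := by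
    intro m h1 h2
    have hch := CH m 0 m h2 (by omega) (by omega)
    calc ⟪g (x 0), x 0 - v m⟫ ≤ ∑ i ∈ Finset.Ico 0 m, w i := hch
      _ ≤ W := by
        rw [hWdef, Finset.range_eq_Ico]
        apply Finset.sum_le_sum_of_subset_of_nonneg
        · apply Finset.Ico_subset_Ico le_rfl h2
        · intro i hi _
          exact hw0 i (Finset.mem_Ico.1 hi).2
  -- extend over the convex hull
  have hTsub : S ⊆ {y : EuclideanSpace ℝ (Fin d) | ⟪g (x 0), x 0 - y⟫ ≤ W} := by
    rw [hSdef]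
    apply convexHull_min
    · rintro y ⟨m, hm, rfl⟩
      exact hvbound m hm.1 hm.2
    · intro y₁ h₁ y₂ h₂ a b ha hb hab
      simp only [Set.mem_setOf_eq] at *
      have e : ⟪g (x 0), x 0 - (a • y₁ + b • y₂)⟫
          = a * ⟪g (x 0), x 0 - y₁⟫ + b * ⟪g (x 0), x 0 - y₂⟫ := by
        rw [inner_sub_right, inner_add_right, real_inner_smul_right,
          real_inner_smul_right, inner_sub_right, inner_sub_right]
        linear_combination (-(inner ℝ (g (x 0)) (x 0) : ℝ)) * hab
      rw [e]
      have hW : a * W + b * W = W := by rw [← add_mul, hab, one_mul]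
      have ha1 := mul_le_mul_of_nonneg_left h₁ ha
      have hb1 := mul_le_mul_of_nonneg_left h₂ hb
      linarith
  have hstar : f (x 0) - f xstar ≤ W := by
    have h1 := polycd_grad_convex hconv hx0 hxs (hgrad _ hx0)
    have h2 : ⟪g (x 0), x 0 - xstar⟫ ≤ W := hTsub hxs
    have e : xstar - x 0 = -(x 0 - xstar) := by abel
    rw [e, inner_neg_right] at h1
    linarith
  -- telescoping
  have htel : ∑ i ∈ Finset.range M, δ i = f (x 0) - f (x M) :=
    Finset.sum_range_sub' (fun i => f (x i)) M
  set R' := ∑ i ∈ Finset.range M, Real.sqrt (2 * A * δ i) with hR'def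
  have hWsplit : W = (f (x 0) - f (x M)) + R' := by
    rw [hWdef, hR'def, ← htel, ← Finset.sum_add_distrib]
  have hmain : f (x M) - f xstar ≤ R' := by
    have : f (x 0) - f (x M) = ∑ i ∈ Finset.range M, δ i := htel.symm
    linarith [hstar, hWsplit]
  have hR'sq : R' ^ 2 ≤ (M : ℝ) * (2 * A * (f (x 0) - f (x M))) := by
    have hcs := sq_sum_le_card_mul_sum_sq (s := Finset.range M)
      (f := fun i => Real.sqrt (2 * A * δ i))
    have hsq : ∀ i ∈ Finset.range M, Real.sqrt (2 * A * δ i) ^ 2 = 2 * A * δ i := by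
      intro i hi
      exact Real.sq_sqrt (by nlinarith [hδ0 i (Finset.mem_range.1 hi), hA.le])
    rw [Finset.sum_congr rfl hsq, Finset.card_range] at hcs
    have hsum2 : ∑ i ∈ Finset.range M, 2 * A * δ i
        = 2 * A * (f (x 0) - f (x M)) := by
      rw [← Finset.mul_sum, htel]
    rw [hsum2] at hcs
    exact hcs
  have h0 : 0 ≤ f (x M) - f xstar := by
    have := hmin (x M) (hxS M le_rfl)
    linarith
  calc (f (x M) - f xstar) ^ 2 ≤ R' ^ 2 := by
        have hR'0 : 0 ≤ R' := le_trans h0 hmain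
        nlinarith
    _ ≤ (M : ℝ) * (2 * A * (f (x 0) - f (x M))) := hR'sq
    _ = 2 * M * L * D ^ 2 * (f (x 0) - f (x M)) := by
        rw [hAdef]; ring
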